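/- Let R be a 2-torsion free commutative ring with identity and n ≥ 1. Then every generalized Jordan derivation of the upper triangular matrix algebra Tₙ(R) is a generalized derivation. -/

import Mathlib

/-- Polarization: a Jordan derivation satisfies the polarized identity. -/
theorem jordan_polar {R A : Type*} [CommRing R] [Ring A] [Module R A]
    (τ : A →ₗ[R] A) (hτ : ∀ a, τ (a * a) = τ a * a + a * τ a) :
    ∀ a b : A, τ (a * b) + τ (b * a) = τ a * b + a * τ b + τ b * a + b * τ a := by
  intro a b
  have e1 := hτ (a + b)
  rw [show (a + b) * (a + b) = a * a + (a * b + b * a) + b * b by noncomm_ring] at e1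
  simp only [map_add, hτ a, hτ b] at e1
  linear_combination (norm := noncomm_ring) e1

theorem jordan_is_deriv {R A : Type*} [CommRing R] [Ring A] [Algebra R A]
    (tf : ∀ x : A, x + x = 0 → x = 0)
    (p : A) (hp : p * p = p)
    (hqp : ∀ u : A, u * p = p * (u * p))
    (faithL : ∀ x : A, x = p * x * p →
      (∀ m : A, m = p * m → m * p = 0 → x * m = 0) → x = 0)
    (faithR : ∀ x : A, x = (1 - p) * x * (1 - p) →
      (∀ m : A, m = p * m → m * p = 0 → m * x = 0) → x = 0)
    (τ : A →ₗ[R] A)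
    (hτ : ∀ a, τ (a * a) = τ a * a + a * τ a) :
    ∀ a b, τ (a * b) = τ a * b + a * τ b := by
  -- basic idempotent facts
  have hq2 : (1 - p) * (1 - p) = 1 - p := by
    rw [sub_mul, one_mul, mul_sub, mul_one, hp]; abel
  have hpq0 : p * (1 - p) = 0 := by rw [mul_sub, mul_one, hp, sub_self]
  have hqp0 : (1 - p) * p = 0 := by rw [sub_mul, one_mul, hp, sub_self]
  have hp' : ∀ x : A, p * (p * x) = p * x := by
    intro x; rw [← mul_assoc, hp]
  have hq' : ∀ x : A, (1 - p) * ((1 - p) * x) = (1 - p) * x := by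
    intro x; rw [← mul_assoc, hq2]
  have hpq' : ∀ x : A, p * ((1 - p) * x) = 0 := by
    intro x; rw [← mul_assoc, hpq0, zero_mul]
  have hqp' : ∀ x : A, (1 - p) * (p * x) = 0 := by
    intro x; rw [← mul_assoc, hqp0, zero_mul]
  -- τ p is in the corner pA(1-p)
  have e1 := hτ p
  rw [hp] at e1
  have hτpp : τ p * p = 0 := by
    have e2 := congrArg (fun z => z * p) e1
    rw [add_mul, mul_assoc, hp] at e2
    have e3 : p * τ p * p = 0 := by linear_combination (norm := noncomm_ring) - e2
    rw [hqp (τ p), ← mul_assoc]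
    exact e3
  have hpτp : τ p = p * τ p := by
    conv_lhs => rw [e1]
    rw [hτpp, zero_add]
  -- the corrected Jordan derivation D
  set m0 := τ p with hm0
  set D : A →ₗ[R] A :=
    τ - (LinearMap.mulRight R m0) + (LinearMap.mulLeft R m0) with hDdef
  have hD : ∀ x, D x = τ x - x * m0 + m0 * x := by
    intro x; simp [hDdef]
  have hDJ : ∀ a, D (a * a) = D a * a + a * D a := by
    intro a; rw [hD, hD, hτ a]; noncomm_ring
  have hDp : D p = 0 := by
    rw [hD, ← hm0, hτpp]
    rw [← hpτp]; abel
  have hD1 : D 1 = 0 := by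
    have h1 : τ 1 = 0 := by
      have h := hτ 1
      simp only [one_mul, mul_one] at h
      have h0 : τ 1 + τ 1 = τ 1 + 0 := by rw [add_zero, ← h]
      exact (add_left_cancel h0)
    rw [hD, h1, one_mul, mul_one]; abel
  have hDq : D (1 - p) = 0 := by
    rw [map_sub, hDp, hD1]; abel
  -- polarization for D
  have hDB : ∀ a b, D (a * b) + D (b * a) = D a * b + a * D b + D b * a + b * D a :=
    jordan_polar D hDJ
  -- Jordan triple identity for D
  have htrip : ∀ a b, D (a * b * a) = D a * b * a + a * D b * a + a * b * D a := by
    intro a b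
    have e1 := hDB a (a * b + b * a)
    have e2 := hDB a b
    have e3 := hDB (a * a) b
    have e4 := hDJ a
    rw [show a * (a * b + b * a) = (a * a * b) + (a * b * a) by noncomm_ring,
        show (a * b + b * a) * a = (a * b * a) + (b * (a * a)) by noncomm_ring] at e1
    simp only [map_add] at e1
    apply sub_eq_zero.mp
    apply tf
    linear_combination (norm := noncomm_ring) e1 - e3 + a * e2 + e2 * a - e4 * b - b * e4
  -- linearized triple identity
  have htrip3 : ∀ a b c, D (a * b * c) + D (c * b * a) =
      D a * b * c + a * D b * c + a * b * D c + D c * b * a + c * D b * a + c * b * D a := by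
    intro a b c
    have e1 := htrip (a + c) b
    rw [show (a + c) * b * (a + c) = a * b * a + (a * b * c + c * b * a) + c * b * c
      by noncomm_ring] at e1
    simp only [map_add] at e1
    linear_combination (norm := noncomm_ring) e1 - htrip a b - htrip c b
  -- corner lemmas
  have L1 : ∀ a, a = p * a * p → D a = p * D a * p := by
    intro a ha
    have h := htrip p a
    rw [hDp, ← ha] at h
    simp only [zero_mul, mul_zero, add_zero, zero_add] at h
    exact h
  have L2 : ∀ b, b = (1 - p) * b * (1 - p) → D b = (1 - p) * D b * (1 - p) := by
    intro b hb
    have h := htrip (1 - p) b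
    rw [hDq, ← hb] at h
    simp only [zero_mul, mul_zero, add_zero, zero_add] at h
    exact h
  have L3 : ∀ m, m = p * m * (1 - p) → D m = p * D m * (1 - p) := by
    intro m hm
    have hpm : p * m = m := by
      rw [hm]
      simp only [← mul_assoc, hp]
    have hmp : m * p = 0 := by
      rw [hm, mul_assoc, mul_assoc, hqp0, mul_zero, mul_zero]
    have e1 := hDB p m
    simp only [hpm, hmp, map_zero, hDp, mul_zero, zero_mul, add_zero, zero_add] at e1
    -- e1 : D m = p * D m + D m * p
    have e2 := congrArg (fun z => p * z) e1
    simp only [mul_add, hp'] at e2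
    have e3 : p * (D m * p) = 0 := by linear_combination (norm := noncomm_ring) - e2
    have e4 : D m * p = 0 := by rw [hqp (D m)]; exact e3
    rw [e4, add_zero] at e1
    have e5 : p * D m * p = 0 := by rw [mul_assoc]; exact e3
    rw [mul_sub, mul_one, e5, sub_zero]
    exact e1
  -- zero-product helpers
  have hz1 : ∀ u v w : A, u * (1 - p) * (p * v * w) = 0 := by
    intro u v w
    rw [mul_assoc p v w, mul_assoc u (1 - p) (p * (v * w)), hqp' (v * w), mul_zero]
  have hz2 : ∀ u v w : A, u * p * ((1 - p) * v * w) = 0 := by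
    intro u v w
    rw [mul_assoc (1 - p) v w, mul_assoc u p ((1 - p) * (v * w)), hpq' (v * w), mul_zero]
  -- case A·M
  have cAM : ∀ x y, x = p * x * p → y = p * y * (1 - p) →
      D (x * y) = D x * y + x * D y := by
    intro x y hx hy
    have e1 := hDB x y
    have h1 : y * x = 0 := by rw [hy, hx]; exact hz1 (p * y) x p
    have h2 : D y * x = 0 := by rw [L3 y hy, hx]; exact hz1 (p * D y) x p
    have h3 : y * D x = 0 := by rw [hy, L1 x hx]; exact hz1 (p * y) (D x) p
    simp only [h1, h2, h3, map_zero, add_zero] at e1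
    exact e1
  -- case M·B
  have cMB : ∀ x y, x = p * x * (1 - p) → y = (1 - p) * y * (1 - p) →
      D (x * y) = D x * y + x * D y := by
    intro x y hx hy
    have e1 := hDB x y
    have h1 : y * x = 0 := by rw [hy, hx]; exact hz1 ((1 - p) * y) x (1 - p)
    have h2 : D y * x = 0 := by rw [L2 y hy, hx]; exact hz1 ((1 - p) * D y) x (1 - p)
    have h3 : y * D x = 0 := by rw [hy, L3 x hx]; exact hz1 ((1 - p) * y) (D x) (1 - p)
    simp only [h1, h2, h3, map_zero, add_zero] at e1
    exact e1
  -- case A·B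
  have cAB : ∀ x y, x = p * x * p → y = (1 - p) * y * (1 - p) →
      D (x * y) = D x * y + x * D y := by
    intro x y hx hy
    have h1 : x * y = 0 := by rw [hx, hy]; exact hz2 (p * x) y (1 - p)
    have h2 : D x * y = 0 := by rw [L1 x hx, hy]; exact hz2 (p * D x) y (1 - p)
    have h3 : x * D y = 0 := by rw [hx, L2 y hy]; exact hz2 (p * x) (D y) (1 - p)
    rw [h1, map_zero, h2, h3, add_zero]
  -- case M·A
  have cMA : ∀ x y, x = p * x * (1 - p) → y = p * y * p →
      D (x * y) = D x * y + x * D y := by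
    intro x y hx hy
    have h1 : x * y = 0 := by rw [hx, hy]; exact hz1 (p * x) y p
    have h2 : D x * y = 0 := by rw [L3 x hx, hy]; exact hz1 (p * D x) y p
    have h3 : x * D y = 0 := by rw [hx, L1 y hy]; exact hz1 (p * x) (D y) p
    rw [h1, map_zero, h2, h3, add_zero]
  -- case M·M
  have cMM : ∀ x y, x = p * x * (1 - p) → y = p * y * (1 - p) →
      D (x * y) = D x * y + x * D y := by
    intro x y hx hy
    have h1 : x * y = 0 := by rw [hx, hy]; exact hz1 (p * x) y (1 - p)
    have h2 : D x * y = 0 := by rw [L3 x hx, hy]; exact hz1 (p * D x) y (1 - p)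
    have h3 : x * D y = 0 := by rw [hx, L3 y hy]; exact hz1 (p * x) (D y) (1 - p)
    rw [h1, map_zero, h2, h3, add_zero]
  -- case B·A
  have cBA : ∀ x y, x = (1 - p) * x * (1 - p) → y = p * y * p →
      D (x * y) = D x * y + x * D y := by
    intro x y hx hy
    have h1 : x * y = 0 := by rw [hx, hy]; exact hz1 ((1 - p) * x) y p
    have h2 : D x * y = 0 := by rw [L2 x hx, hy]; exact hz1 ((1 - p) * D x) y p
    have h3 : x * D y = 0 := by rw [hx, L1 y hy]; exact hz1 ((1 - p) * x) (D y) p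
    rw [h1, map_zero, h2, h3, add_zero]
  -- case B·M
  have cBM : ∀ x y, x = (1 - p) * x * (1 - p) → y = p * y * (1 - p) →
      D (x * y) = D x * y + x * D y := by
    intro x y hx hy
    have h1 : x * y = 0 := by rw [hx, hy]; exact hz1 ((1 - p) * x) y (1 - p)
    have h2 : D x * y = 0 := by rw [L2 x hx, hy]; exact hz1 ((1 - p) * D x) y (1 - p)
    have h3 : x * D y = 0 := by rw [hx, L3 y hy]; exact hz1 ((1 - p) * x) (D y) (1 - p)
    rw [h1, map_zero, h2, h3, add_zero]
  -- case A·A, using faithfulness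
  have cAA : ∀ x y, x = p * x * p → y = p * y * p →
      D (x * y) = D x * y + x * D y := by
    intro x y hx hy
    have hxyA : x * y = p * (x * y) * p := by
      rw [hx, hy]
      simp only [mul_assoc, hp, hq2, hp', hq', hpq', hqp', hpq0, hqp0, mul_zero, zero_mul,
        mul_one, one_mul]
    have c1 : D (x * y) = p * D (x * y) * p := L1 _ hxyA
    have c2 : D x * y = p * (D x * y) * p := by
      rw [L1 x hx, hy]
      simp only [mul_assoc, hp, hq2, hp', hq', hpq', hqp', hpq0, hqp0, mul_zero, zero_mul,
        mul_one, one_mul]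
    have c3 : x * D y = p * (x * D y) * p := by
      rw [hx, L1 y hy]
      simp only [mul_assoc, hp, hq2, hp', hq', hpq', hqp', hpq0, hqp0, mul_zero, zero_mul,
        mul_one, one_mul]
    have hzc : D (x * y) - D x * y - x * D y
        = p * (D (x * y) - D x * y - x * D y) * p := by
      linear_combination (norm := noncomm_ring) c1 - c2 - c3
    have hann : ∀ m : A, m = p * m → m * p = 0 →
        (D (x * y) - D x * y - x * D y) * m = 0 := by
      intro m hm1 hm2
      have hmM : m = p * m * (1 - p) := by
        have : p * m * (1 - p) = m := by
          rw [mul_sub, mul_one, ← hm1, hm2, sub_zero]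
        exact this.symm
      have hmy : m * y = 0 := by rw [hmM, hy]; exact hz1 (p * m) y p
      have hDmy : D m * y = 0 := by rw [L3 m hmM, hy]; exact hz1 (p * D m) y p
      have hmDy : m * D y = 0 := by rw [hmM, L1 y hy]; exact hz1 (p * m) (D y) p
      have e := htrip3 x y m
      simp only [hmy, hDmy, hmDy, zero_mul, map_zero, add_zero] at e
      have e2 := cAM (x * y) m hxyA hmM
      linear_combination (norm := noncomm_ring) e - e2
    have hz0 := faithL _ hzc hann
    linear_combination (norm := noncomm_ring) hz0
  -- case B·B, using faithfulness
  have cBB : ∀ x y, x = (1 - p) * x * (1 - p) → y = (1 - p) * y * (1 - p) →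
      D (x * y) = D x * y + x * D y := by
    intro x y hx hy
    have hxyB : x * y = (1 - p) * (x * y) * (1 - p) := by
      rw [hx, hy]
      simp only [mul_assoc, hp, hq2, hp', hq', hpq', hqp', hpq0, hqp0, mul_zero, zero_mul,
        mul_one, one_mul]
    have c1 : D (x * y) = (1 - p) * D (x * y) * (1 - p) := L2 _ hxyB
    have c2 : D x * y = (1 - p) * (D x * y) * (1 - p) := by
      rw [L2 x hx, hy]
      simp only [mul_assoc, hp, hq2, hp', hq', hpq', hqp', hpq0, hqp0, mul_zero, zero_mul,
        mul_one, one_mul]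
    have c3 : x * D y = (1 - p) * (x * D y) * (1 - p) := by
      rw [hx, L2 y hy]
      simp only [mul_assoc, hp, hq2, hp', hq', hpq', hqp', hpq0, hqp0, mul_zero, zero_mul,
        mul_one, one_mul]
    have hzc : D (x * y) - D x * y - x * D y
        = (1 - p) * (D (x * y) - D x * y - x * D y) * (1 - p) := by
      linear_combination (norm := noncomm_ring) c1 - c2 - c3
    have hann : ∀ m : A, m = p * m → m * p = 0 →
        m * (D (x * y) - D x * y - x * D y) = 0 := by
      intro m hm1 hm2
      have hmM : m = p * m * (1 - p) := by
        have : p * m * (1 - p) = m := by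
          rw [mul_sub, mul_one, ← hm1, hm2, sub_zero]
        exact this.symm
      have hxm : x * m = 0 := by rw [hx, hmM]; exact hz1 ((1 - p) * x) m (1 - p)
      have hDxm : D x * m = 0 := by rw [L2 x hx, hmM]; exact hz1 ((1 - p) * D x) m (1 - p)
      have hxDm : x * D m = 0 := by rw [hx, L3 m hmM]; exact hz1 ((1 - p) * x) (D m) (1 - p)
      have e := htrip3 m x y
      simp only [mul_assoc] at e
      simp only [hxm, hDxm, hxDm, mul_zero, map_zero, add_zero] at e
      have e2 := cMB m (x * y) hmM hxyB
      linear_combination (norm := noncomm_ring) e - e2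
    have hz0 := faithR _ hzc hann
    linear_combination (norm := noncomm_ring) hz0
  -- D is a derivation
  have main : ∀ x y, D (x * y) = D x * y + x * D y := by
    intro x y
    have hdx : x = p * x * p + p * x * (1 - p) + (1 - p) * x * (1 - p) := by
      linear_combination (norm := noncomm_ring) hqp x
    have hdy : y = p * y * p + p * y * (1 - p) + (1 - p) * y * (1 - p) := by
      linear_combination (norm := noncomm_ring) hqp y
    have hxa : p * x * p = p * (p * x * p) * p := by
      simp only [mul_assoc, hp, hq2, hp', hq', hpq', hqp', hpq0, hqp0, mul_zero, zero_mul,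
        mul_one, one_mul]
    have hxm : p * x * (1 - p) = p * (p * x * (1 - p)) * (1 - p) := by
      simp only [mul_assoc, hp, hq2, hp', hq', hpq', hqp', hpq0, hqp0, mul_zero, zero_mul,
        mul_one, one_mul]
    have hxb : (1 - p) * x * (1 - p) = (1 - p) * ((1 - p) * x * (1 - p)) * (1 - p) := by
      simp only [mul_assoc, hp, hq2, hp', hq', hpq', hqp', hpq0, hqp0, mul_zero, zero_mul,
        mul_one, one_mul]
    have hya : p * y * p = p * (p * y * p) * p := by
      simp only [mul_assoc, hp, hq2, hp', hq', hpq', hqp', hpq0, hqp0, mul_zero, zero_mul,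
        mul_one, one_mul]
    have hym : p * y * (1 - p) = p * (p * y * (1 - p)) * (1 - p) := by
      simp only [mul_assoc, hp, hq2, hp', hq', hpq', hqp', hpq0, hqp0, mul_zero, zero_mul,
        mul_one, one_mul]
    have hyb : (1 - p) * y * (1 - p) = (1 - p) * ((1 - p) * y * (1 - p)) * (1 - p) := by
      simp only [mul_assoc, hp, hq2, hp', hq', hpq', hqp', hpq0, hqp0, mul_zero, zero_mul,
        mul_one, one_mul]
    set x1 := p * x * p
    set x2 := p * x * (1 - p)
    set x3 := (1 - p) * x * (1 - p)
    set y1 := p * y * p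
    set y2 := p * y * (1 - p)
    set y3 := (1 - p) * y * (1 - p)
    have expand : x * y = x1 * y1 + x1 * y2 + x1 * y3 + x2 * y1 + x2 * y2 + x2 * y3
        + x3 * y1 + x3 * y2 + x3 * y3 := by
      conv_lhs => rw [hdx, hdy]
      noncomm_ring
    rw [expand]
    simp only [map_add]
    rw [cAA x1 y1 hxa hya, cAM x1 y2 hxa hym, cAB x1 y3 hxa hyb,
        cMA x2 y1 hxm hya, cMM x2 y2 hxm hym, cMB x2 y3 hxm hyb,
        cBA x3 y1 hxb hya, cBM x3 y2 hxb hym, cBB x3 y3 hxb hyb]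
    conv_rhs => rw [hdx, hdy]
    simp only [map_add, add_mul, mul_add]
    abel
  -- conclude for τ
  intro a b
  have h := main a b
  simp only [hD] at h
  linear_combination (norm := noncomm_ring) h

open Matrix

/-- The `R`-subalgebra of `n × n` upper triangular matrices. -/
def upperTriangular (n : ℕ) (R : Type*) [CommRing R] :
    Subalgebra R (Matrix (Fin n) (Fin n) R) where
  carrier := {M | M.BlockTriangular id}
  mul_mem' hM hN := hM.mul hN
  add_mem' hM hN := hM.add hN
  algebraMap_mem' r := by
    intro i j hij
    simp only [Matrix.algebraMap_matrix_apply]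
    exact if_neg (fun h => absurd h (ne_of_gt hij))

lemma std_mem {R : Type*} [CommRing R] {n : ℕ} {i j : Fin n} (hij : i ≤ j) (r : R) :
    Matrix.single i j r ∈ upperTriangular n R := by
  intro a b hab
  apply Matrix.single_apply_of_ne
  rintro ⟨rfl, rfl⟩
  exact absurd hij (not_le.mpr hab)

lemma tf_upper {R : Type*} [CommRing R] (h2 : ∀ x : R, x + x = 0 → x = 0) (n : ℕ) :
    ∀ x : upperTriangular n R, x + x = 0 → x = 0 := by
  intro x hx
  apply Subtype.ext
  ext i j
  simp only [ZeroMemClass.coe_zero, Matrix.zero_apply]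
  have h := congrArg (fun z : upperTriangular n R => (z : Matrix (Fin n) (Fin n) R) i j) hx
  simp only [Subalgebra.coe_add, Matrix.add_apply, ZeroMemClass.coe_zero,
    Matrix.zero_apply] at h
  exact h2 _ h

set_option maxHeartbeats 1000000 in
set_option synthInstance.maxHeartbeats 200000 in
lemma jordan_upper {R : Type*} [CommRing R] (h2 : ∀ x : R, x + x = 0 → x = 0) (m : ℕ)
    (τ : upperTriangular (m + 2) R →ₗ[R] upperTriangular (m + 2) R)
    (hτ : ∀ a, τ (a * a) = τ a * a + a * τ a) :
    ∀ a b, τ (a * b) = τ a * b + a * τ b := by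
  set p : upperTriangular (m + 2) R :=
    ⟨Matrix.single 0 0 1, std_mem (le_refl 0) 1⟩ with hpdef
  have hPcoe : (p : Matrix (Fin (m + 2)) (Fin (m + 2)) R) = Matrix.single 0 0 1 := rfl
  apply jordan_is_deriv (tf_upper h2 _) p ?_ ?_ ?_ ?_ τ hτ
  · -- p * p = p
    apply Subtype.ext
    simp only [Subalgebra.coe_mul, hPcoe]
    rw [Matrix.single_mul_single_same, one_mul]
  · -- hqp
    intro u
    apply Subtype.ext
    simp only [Subalgebra.coe_mul, hPcoe]
    ext i j
    by_cases hi : i = 0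
    · subst hi
      rw [Matrix.single_mul_apply_same, one_mul]
    · have hiu : (u : Matrix (Fin (m + 2)) (Fin (m + 2)) R) i 0 = 0 :=
        u.2 (Fin.pos_of_ne_zero hi)
      by_cases hj : j = 0
      · subst hj
        simp [Matrix.single_mul_apply_of_ne, hi, hiu]
      · simp [Matrix.single_mul_apply_of_ne,
          Matrix.mul_single_apply_of_ne, hi, hj]
  · -- faithL
    intro x hx hm
    have hval := congrArg (Subtype.val) hx
    simp only [Subalgebra.coe_mul, hPcoe] at hval
    set m1 : upperTriangular (m + 2) R :=
      ⟨Matrix.single 0 1 1, std_mem (Fin.zero_le 1) 1⟩ with hm1def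
    have hone : (1 : Fin (m + 2)) ≠ 0 := by simp [Fin.ext_iff]
    have hm1 : m1 = p * m1 := by
      apply Subtype.ext
      simp only [Subalgebra.coe_mul, hPcoe]
      show Matrix.single 0 1 1 = _
      rw [Matrix.single_mul_single_same, one_mul]
    have hm2 : m1 * p = 0 := by
      apply Subtype.ext
      simp only [Subalgebra.coe_mul, hPcoe, ZeroMemClass.coe_zero]
      show Matrix.single 0 1 1 * _ = _
      rw [Matrix.single_mul_single_of_ne (h := hone)]
    have h0 := hm m1 hm1 hm2
    have h00 : (x : Matrix (Fin (m + 2)) (Fin (m + 2)) R) 0 0 = 0 := by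
      have h := congrArg
        (fun z : upperTriangular (m + 2) R => (z : Matrix (Fin (m + 2)) (Fin (m + 2)) R) 0 1) h0
      simp only [Subalgebra.coe_mul, ZeroMemClass.coe_zero, Matrix.zero_apply] at h
      rwa [Matrix.mul_single_apply_same, mul_one] at h
    apply Subtype.ext
    ext i j
    simp only [ZeroMemClass.coe_zero, Matrix.zero_apply]
    conv_lhs => rw [hval]
    by_cases hj : j = 0
    · subst hj
      rw [Matrix.mul_single_apply_same, mul_one]
      by_cases hi : i = 0
      · subst hi
        rw [Matrix.single_mul_apply_same, one_mul, h00]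
      · simp [Matrix.single_mul_apply_of_ne, hi]
    · simp [Matrix.mul_single_apply_of_ne, hj]
  · -- faithR
    intro x hx hm
    have hval := congrArg (Subtype.val) hx
    simp only [Subalgebra.coe_mul, Subalgebra.coe_sub, Subalgebra.coe_one, hPcoe] at hval
    apply Subtype.ext
    ext i j
    simp only [ZeroMemClass.coe_zero, Matrix.zero_apply]
    by_cases hi : i = 0
    · subst hi
      conv_lhs => rw [hval]
      rw [show (1 - Matrix.single (0 : Fin (m + 2)) 0 (1 : R)) * (x : Matrix (Fin (m + 2)) (Fin (m + 2)) R) * (1 - Matrix.single 0 0 1)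
          = ((x : Matrix (Fin (m + 2)) (Fin (m + 2)) R) * (1 - Matrix.single 0 0 1))
            - Matrix.single 0 0 1 * ((x : Matrix (Fin (m + 2)) (Fin (m + 2)) R) * (1 - Matrix.single 0 0 1)) by noncomm_ring,
        Matrix.sub_apply, Matrix.single_mul_apply_same, one_mul, sub_self]
    · -- use m = E 0 i
      set mi : upperTriangular (m + 2) R :=
        ⟨Matrix.single 0 i 1, std_mem (Fin.zero_le i) 1⟩ with hmidef
      have hma : mi = p * mi := by
        apply Subtype.ext
        simp only [Subalgebra.coe_mul, hPcoe]
        show Matrix.single 0 i 1 = _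
        rw [Matrix.single_mul_single_same, one_mul]
      have hmb : mi * p = 0 := by
        apply Subtype.ext
        simp only [Subalgebra.coe_mul, hPcoe, ZeroMemClass.coe_zero]
        show Matrix.single 0 i 1 * _ = _
        rw [Matrix.single_mul_single_of_ne (h := hi)]
      have h0 := hm mi hma hmb
      have h := congrArg
        (fun z : upperTriangular (m + 2) R => (z : Matrix (Fin (m + 2)) (Fin (m + 2)) R) 0 j) h0
      simp only [Subalgebra.coe_mul, ZeroMemClass.coe_zero, Matrix.zero_apply] at h
      rwa [Matrix.single_mul_apply_same, one_mul] at h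

set_option maxHeartbeats 1000000 in
set_option synthInstance.maxHeartbeats 200000 in
/-- Every generalized Jordan derivation of the upper triangular matrix algebra `Tₙ(R)`
over a 2-torsion free commutative ring `R` with identity is a generalized derivation. -/
theorem stmt_8 {R : Type*} [CommRing R]
    (h2 : ∀ x : R, x + x = 0 → x = 0)
    (n : ℕ) (hn : 1 ≤ n)
    (Ξ τ : upperTriangular n R →ₗ[R] upperTriangular n R)
    (hτ : ∀ a, τ (a * a) = τ a * a + a * τ a)
    (hΞ : ∀ a, Ξ (a * a) = Ξ a * a + a * τ a) :
    ∃ d : upperTriangular n R →ₗ[R] upperTriangular n R,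
      (∀ a b, d (a * b) = d a * b + a * d b) ∧
      (∀ a b, Ξ (a * b) = Ξ a * b + a * d b) := by
  suffices der : ∀ a b, τ (a * b) = τ a * b + a * τ b by
    refine ⟨τ, der, ?_⟩
    intro a b
    set δ : upperTriangular n R →ₗ[R] upperTriangular n R := Ξ - τ with hδdef
    have hδc : ∀ c, δ c = Ξ c - τ c := fun c => rfl
    have hδJ : ∀ c, δ (c * c) = δ c * c := by
      intro c; rw [hδc, hδc, hΞ c, hτ c, sub_mul]; abel
    have hδ1 : ∀ c, δ c = δ 1 * c := by
      intro c
      have e1 := hδJ (c + 1)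
      rw [show (c + 1) * (c + 1) = c * c + (c + c) + 1 by noncomm_ring] at e1
      simp only [map_add] at e1
      linear_combination (norm := noncomm_ring) e1 - hδJ c
    have k1 : Ξ (a * b) = δ (a * b) + τ (a * b) := by rw [hδc]; abel
    have k2 : Ξ a = δ a + τ a := by rw [hδc]; abel
    rw [k1, k2, hδ1 (a * b), hδ1 a, der a b]
    noncomm_ring
  rcases n with _ | _ | m
  · exact absurd hn (by omega)
  · -- n = 1 : commutative case
    intro a b
    have hcomm : ∀ u v : upperTriangular 1 R, u * v = v * u := by
      intro u v
      apply Subtype.ext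
      rw [Subalgebra.coe_mul, Subalgebra.coe_mul]
      ext i j
      rw [Matrix.mul_apply, Matrix.mul_apply]
      apply Finset.sum_congr rfl
      intro k _
      fin_cases i <;> fin_cases j <;> fin_cases k <;> exact mul_comm _ _
    have e := jordan_polar τ hτ a b
    rw [hcomm b a, hcomm (τ b) a, hcomm b (τ a)] at e
    have h0 : τ (a * b) - (τ a * b + a * τ b) = 0 :=
      tf_upper h2 1 _ (by linear_combination (norm := noncomm_ring) e)
    linear_combination (norm := noncomm_ring) h0
  · exact jordan_upper h2 m τ hτ
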